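/- Let A be a quaternion algebra over a field K (char ≠ 2), and L = K(√d) ⊆ A. Then the quaternion algebra (−1, d)_K is split at a place where A is split if and only if −1 is a local norm from L; and the normalizer condition: an element u of A* normalizing L induces either the identity or the conjugation on L, and if it induces conjugation then its reduced norm lies in −c²·N_{L/K}(L*) where c is any pure quaternion conjugating L. -/

import Mathlib

private theorem quad_decomp {K L : Type*} [Field K] [Field L] [Algebra K L]
    {d : K} {s : L} (hs : s ^ 2 = algebraMap K L d)
    (hgen : Algebra.adjoin K {s} = ⊤) (x : L) :
    ∃ α β : K, x = algebraMap K L α + β • s := by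
  let S : Subalgebra K L :=
  { carrier := {x | ∃ α β : K, x = algebraMap K L α + β • s}
    mul_mem' := by
      rintro x y ⟨α, β, rfl⟩ ⟨α', β', rfl⟩
      refine ⟨α*α' + β*β'*d, α*β' + α'*β, ?_⟩
      simp only [Algebra.smul_def, map_add, map_mul]
      linear_combination (algebraMap K L β * algebraMap K L β') * hs
    add_mem' := by
      rintro x y ⟨α, β, rfl⟩ ⟨α', β', rfl⟩
      exact ⟨α + α', β + β', by rw [map_add, add_smul]; ring⟩
    algebraMap_mem' := fun r => ⟨r, 0, by simp⟩ }
  have hsS : s ∈ S := ⟨0, 1, by simp⟩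
  have : Algebra.adjoin K {s} ≤ S := Algebra.adjoin_le (Set.singleton_subset_iff.2 hsS)
  rw [hgen] at this
  exact this (Algebra.mem_top (R := K) (A := L))

private theorem quad_indep {K L : Type*} [Field K] [Field L] [Algebra K L]
    {d : K} (hd : ¬∃ x : K, x ^ 2 = d) {s : L} (hs : s ^ 2 = algebraMap K L d)
    {α β : K} (h : algebraMap K L α + β • s = 0) : α = 0 ∧ β = 0 := by
  have hβ : β = 0 := by
    by_contra hβ
    apply hd
    refine ⟨α / β, ?_⟩
    have hsv : s = algebraMap K L (-(α/β)) := by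
      have hb : (algebraMap K L β) ≠ 0 := by
        simpa using (algebraMap K L).injective.ne hβ
      rw [Algebra.smul_def] at h
      apply mul_left_cancel₀ hb
      rw [map_neg, map_div₀, mul_neg, mul_div_cancel₀ _ hb]
      linear_combination h
    have := hs
    rw [hsv, ← map_pow] at this
    have := (algebraMap K L).injective this
    rw [← this]; ring
  refine ⟨?_, hβ⟩
  rw [hβ, zero_smul, add_zero] at h
  exact (algebraMap K L).injective (by simpa using h)

private theorem quad_norm {K L : Type*} [Field K] [Field L] [Algebra K L]
    {d : K} (hd : ¬∃ x : K, x ^ 2 = d) {s : L} (hs : s ^ 2 = algebraMap K L d)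
    (hgen : Algebra.adjoin K {s} = ⊤) (α β : K) :
    Algebra.norm K (algebraMap K L α + β • s) = α ^ 2 - d * β ^ 2 := by
  have hli : LinearIndependent K ![(1 : L), s] := by
    rw [LinearIndependent.pair_iff]
    intro p q hpq
    have : algebraMap K L p + q • s = 0 := by
      rw [Algebra.algebraMap_eq_smul_one]; exact hpq
    exact quad_indep hd hs this
  have hsp : ⊤ ≤ Submodule.span K (Set.range ![(1 : L), s]) := by
    intro x _
    obtain ⟨p, q, rfl⟩ := quad_decomp hs hgen x
    have : Set.range ![(1 : L), s] = {1, s} := by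
      simp [Matrix.range_cons, Matrix.range_empty]
      ext y; simp [or_comm]
    rw [this, Submodule.mem_span_pair]
    exact ⟨p, q, by rw [Algebra.algebraMap_eq_smul_one]⟩
  let b : Module.Basis (Fin 2) K L := Module.Basis.mk hli hsp
  have hb0 : b 0 = 1 := by simp [b, Module.Basis.mk_apply]
  have hb1 : b 1 = s := by simp [b, Module.Basis.mk_apply]
  have hrepr : ∀ p q : K, b.repr (algebraMap K L p + q • s) = Finsupp.single 0 p + Finsupp.single 1 q := by
    intro p q
    have : algebraMap K L p + q • s = p • b 0 + q • b 1 := by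
      rw [hb0, hb1, Algebra.algebraMap_eq_smul_one]
    rw [this, map_add, map_smul, map_smul, b.repr_self, b.repr_self]
    simp [Finsupp.smul_single]
  have e0 : b.repr ((algebraMap K L α + β • s) * b 0) = Finsupp.single 0 α + Finsupp.single 1 β := by
    rw [hb0, mul_one, hrepr]
  have e1 : b.repr ((algebraMap K L α + β • s) * b 1) = Finsupp.single 0 (d*β) + Finsupp.single 1 α := by
    rw [hb1]
    have : (algebraMap K L α + β • s) * s = algebraMap K L (d*β) + α • s := by
      rw [add_mul, Algebra.smul_def, Algebra.smul_def, map_mul]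
      linear_combination (algebraMap K L β) * hs
    rw [this, hrepr]
  have hM : Algebra.leftMulMatrix b (algebraMap K L α + β • s) = !![α, d*β; β, α] := by
    ext i j
    rw [Algebra.leftMulMatrix_eq_repr_mul]
    fin_cases i <;> fin_cases j <;> simp [e0, e1]
  rw [Algebra.norm_eq_matrix_det b, hM, Matrix.det_fin_two_of]
  ring



private theorem solve_conic {K : Type*} [Field K] {d : K} (hd : ¬∃ x : K, x ^ 2 = d)
    {t x y z : K} (hN : t^2 + x^2 - d*y^2 - d*z^2 = 0)
    (hnz : ¬(t = 0 ∧ x = 0 ∧ y = 0 ∧ z = 0)) :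
    ∃ p q : K, p^2 - d*q^2 = -1 := by
  by_cases him : ∃ e : K, e^2 = -1
  · obtain ⟨e, he⟩ := him; exact ⟨e, 0, by rw [he]; ring⟩
  · have him' : ∀ u v : K, u^2 + v^2 = 0 → u = 0 ∧ v = 0 := by
      intro u v huv
      by_cases hv : v = 0
      · refine ⟨?_, hv⟩
        rw [hv] at huv
        have : u^2 = 0 := by linear_combination huv
        exact pow_eq_zero_iff (by norm_num : (2:ℕ) ≠ 0) |>.mp this
      · exact absurd ⟨u/v, by field_simp; linear_combination huv⟩ him
    have hD : y^2 + z^2 ≠ 0 := by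
      intro h0
      obtain ⟨hy, hz⟩ := him' y z h0
      have h1 : t^2 + x^2 = 0 := by rw [hy, hz] at hN; linear_combination hN
      obtain ⟨ht, hx⟩ := him' t x h1
      exact hnz ⟨ht, hx, hy, hz⟩
    have hdD : t^2 + x^2 = d * (y^2 + z^2) := by linear_combination hN
    have key : (t*y + x*z)^2 + (x*y - t*z)^2 = d * (y^2+z^2)^2 := by
      linear_combination (y^2 + z^2) * hdD
    by_cases hQ : x*y - t*z = 0
    · refine absurd ⟨(t*y + x*z)/(y^2+z^2), ?_⟩ hd
      field_simp
      linear_combination key - (x*y - t*z) * hQ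
    · refine ⟨(t*y+x*z)/(x*y-t*z), (y^2+z^2)/(x*y-t*z), ?_⟩
      rw [div_pow, div_pow, ← mul_div_assoc, ← sub_div, div_eq_iff (pow_ne_zero 2 hQ)]
      linear_combination key

private theorem quad_split {K : Type*} [Field K] (h2 : (2:K) ≠ 0) {d : K}
    (hd : ¬∃ x : K, x ^ 2 = d) {p q : K} (hpq : p^2 - d*q^2 = -1) :
    Nonempty (QuaternionAlgebra K (-1) 0 d ≃ₐ[K] Matrix (Fin 2) (Fin 2) K) := by
  have hd0 : d ≠ 0 := fun h => hd ⟨0, by rw [h]; ring⟩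
  have hpq0 : ¬(p = 0 ∧ q = 0) := by
    rintro ⟨rfl, rfl⟩
    have h10 : (1:K) = 0 := by linear_combination hpq
    exact one_ne_zero h10
  let I : Matrix (Fin 2) (Fin 2) K := !![p, -(d*q); q, -p]
  let J : Matrix (Fin 2) (Fin 2) K := !![0, d; 1, 0]
  have hIJ : I * J = !![-(d*q), p*d; -p, q*d] := by
    simp [I, J, Matrix.mul_fin_two]
  have hII : I * I = (-1 : K) • (1 : Matrix (Fin 2) (Fin 2) K) := by
    simp only [I, Matrix.mul_fin_two, Matrix.one_fin_two, Matrix.smul_of]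
    ext i j
    fin_cases i <;> fin_cases j <;> (try simp) <;> first | ring1 | linear_combination hpq | linear_combination -hpq
  have hJJ : J * J = d • (1 : Matrix (Fin 2) (Fin 2) K) := by
    simp only [J, Matrix.mul_fin_two, Matrix.one_fin_two, Matrix.smul_of]
    ext i j
    fin_cases i <;> fin_cases j <;> simp
  have hJI : J * I = -(I * J) := by
    rw [hIJ]
    simp only [I, J, Matrix.mul_fin_two]
    ext i j
    fin_cases i <;> fin_cases j <;> simp <;> ring
  let B : QuaternionAlgebra.Basis (Matrix (Fin 2) (Fin 2) K) (-1) 0 d :=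
    { i := I, j := J, k := I * J
      i_mul_i := by rw [hII, zero_smul, add_zero], j_mul_j := hJJ, i_mul_j := rfl,
      j_mul_i := by rw [hJI, zero_smul, zero_sub] }
  let f := B.liftHom
  have hf : ∀ w : QuaternionAlgebra K (-1) 0 d,
      f w = algebraMap K _ w.re + w.imI • I + w.imJ • J + w.imK • (I * J) := fun w => rfl
  have hinj : Function.Injective f := by
    intro w₁ w₂ hw
    have h0 : f (w₁ - w₂) = 0 := by rw [map_sub, hw, sub_self]
    set w := w₁ - w₂ with hwdef
    rw [hf, hIJ] at h0
    have hE : ∀ i j : Fin 2, (algebraMap K (Matrix (Fin 2) (Fin 2) K) w.re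
        + w.imI • I + w.imJ • J + w.imK • !![-(d*q), p*d; -p, q*d]) i j = 0 := by
      intro i j; rw [h0]; rfl
    have E00 := hE 0 0; have E01 := hE 0 1; have E10 := hE 1 0; have E11 := hE 1 1
    simp [I, J, Matrix.algebraMap_matrix_apply] at E00 E01 E10 E11
    have ht : w.re = 0 := by
      rcases mul_eq_zero.mp (show (2:K) * w.re = 0 by linear_combination E00 + E11) with h | h
      · exact absurd h h2
      · exact h
    have hy : w.imJ = 0 := by
      have h2y : (2*d) * w.imJ = 0 := by linear_combination d * E10 + E01
      rcases mul_eq_zero.mp h2y with h | h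
      · exact absurd (mul_eq_zero.mp h) (by push_neg; exact ⟨h2, hd0⟩)
      · exact h
    have hk : w.imK = 0 := by
      linear_combination p * E10 - q * E00 + q * ht - p * hy + w.imK * hpq
    have hi : w.imI = 0 := by
      by_cases hp : p = 0
      · have hq : q ≠ 0 := fun hq => hpq0 ⟨hp, hq⟩
        have : q * w.imI = 0 := by linear_combination E10 - hy + w.imK * hp
        exact (mul_eq_zero.mp this).resolve_left hq
      · have : p * w.imI = 0 := by linear_combination E00 - ht + d * q * hk
        exact (mul_eq_zero.mp this).resolve_left hp
    have hwz : w = 0 := QuaternionAlgebra.ext ht hi hy hk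
    rw [hwdef] at hwz
    exact sub_eq_zero.mp hwz
  have hfr : Module.finrank K (QuaternionAlgebra K (-1) 0 d)
      = Module.finrank K (Matrix (Fin 2) (Fin 2) K) := by
    rw [QuaternionAlgebra.finrank_eq_four, Module.finrank_matrix]
    simp
  have hsurj : Function.Surjective f := by
    have := (LinearMap.injective_iff_surjective_of_finrank_eq_finrank
      (f := f.toLinearMap) hfr).mp hinj
    exact this
  exact ⟨AlgEquiv.ofBijective f ⟨hinj, hsurj⟩⟩

private theorem quad_split_rev {K : Type*} [Field K] {d : K}
    (hd : ¬∃ x : K, x ^ 2 = d)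
    (e : QuaternionAlgebra K (-1) 0 d ≃ₐ[K] Matrix (Fin 2) (Fin 2) K) :
    ∃ p q : K, p^2 - d*q^2 = -1 := by
  let E1 : Matrix (Fin 2) (Fin 2) K := Matrix.single 0 0 1
  let E2 : Matrix (Fin 2) (Fin 2) K := Matrix.single 1 1 1
  let q1 := e.symm E1
  let q2 := e.symm E2
  have hq1 : q1 ≠ 0 := by
    intro h
    have : E1 = 0 := by
      have := congrArg e h
      simpa [q1] using this
    have := congrFun (congrFun this 0) 0
    simp [E1, Matrix.single] at this
  have hq2 : q2 ≠ 0 := by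
    intro h
    have : E2 = 0 := by
      have := congrArg e h
      simpa [q2] using this
    have := congrFun (congrFun this 1) 1
    simp [E2, Matrix.single] at this
  have hmul : q1 * q2 = 0 := by
    have : E1 * E2 = 0 := by simp [E1, E2]
    rw [show (0 : QuaternionAlgebra K (-1) 0 d) = e.symm 0 by simp]
    rw [← this, map_mul]
  set N : K := q1.re^2 + q1.imI^2 - d*q1.imJ^2 - d*q1.imK^2 with hNdef
  have hstar : star q1 * q1 = (⟨N, 0, 0, 0⟩ : QuaternionAlgebra K (-1) 0 d) := by
    ext <;> simp [QuaternionAlgebra.re_mul, QuaternionAlgebra.imI_mul,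
      QuaternionAlgebra.imJ_mul, QuaternionAlgebra.imK_mul] <;> ring
  have hNz : (⟨N, 0, 0, 0⟩ : QuaternionAlgebra K (-1) 0 d) * q2 = 0 := by
    rw [← hstar, mul_assoc, hmul, mul_zero]
  have hN : N = 0 := by
    by_contra hN
    apply hq2
    have h1 := congrArg QuaternionAlgebra.re hNz
    have h2 := congrArg QuaternionAlgebra.imI hNz
    have h3 := congrArg QuaternionAlgebra.imJ hNz
    have h4 := congrArg QuaternionAlgebra.imK hNz
    simp [QuaternionAlgebra.re_mul, QuaternionAlgebra.imI_mul,
      QuaternionAlgebra.imJ_mul, QuaternionAlgebra.imK_mul] at h1 h2 h3 h4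
    ext <;> simp
    · exact h1.resolve_left hN
    · exact h2.resolve_left hN
    · exact h3.resolve_left hN
    · exact h4.resolve_left hN
  refine solve_conic hd (t := q1.re) (x := q1.imI) (y := q1.imJ) (z := q1.imK) ?_ ?_
  · linear_combination hN
  · rintro ⟨h1, h2, h3, h4⟩
    exact hq1 (QuaternionAlgebra.ext h1 h2 h3 h4)

set_option maxHeartbeats 1600000 in
/-- Let `A = ℍ[K,a,b]` be a quaternion algebra over a field `K` (char ≠ 2) and
`L = K(√d) ⊆ A`. Then `(−1,d)_K` is split iff `−1` is a norm from `L`; moreover any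
`u ∈ A*` normalizing `L` induces either the identity or the conjugation on `L`, and
if it induces the conjugation then its reduced norm `u · star u` lies in
`−c² · N_{L/K}(L*)`, where `c` is a pure quaternion conjugating `L`. -/
theorem split_criterion_and_normalizer
    (K : Type*) [Field K] (h2 : (2 : K) ≠ 0) (a b : K)
    (d : K) (hd : ¬∃ x : K, x ^ 2 = d)
    (L : Type*) [Field L] [Algebra K L] (hL : Module.finrank K L = 2)
    (s : L) (hs : s ^ 2 = algebraMap K L d) (hgen : Algebra.adjoin K {s} = ⊤)
    (σ : L ≃ₐ[K] L) (hσ : σ ≠ AlgEquiv.refl)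
    (ι : L →ₐ[K] QuaternionAlgebra K a 0 b)
    (c : QuaternionAlgebra K a 0 b) (hc0 : c ≠ 0) (hcpure : c.re = 0)
    (hcconj : ∀ x : L, c * ι x = ι (σ x) * c) :
    (Nonempty (QuaternionAlgebra K (-1) 0 d ≃ₐ[K] Matrix (Fin 2) (Fin 2) K) ↔
      ∃ l : L, l ≠ 0 ∧ Algebra.norm K l = -1) ∧
    ∀ u : (QuaternionAlgebra K a 0 b)ˣ,
      (∀ x : L, ∃ y : L, Units.val u * ι x = ι y * Units.val u) →
      ((∀ x : L, Units.val u * ι x = ι x * Units.val u) ∨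
        ((∀ x : L, Units.val u * ι x = ι (σ x) * Units.val u) ∧
          ∃ l : L, l ≠ 0 ∧
            Units.val u * star (Units.val u) = -(c * c) * ι (l * σ l))) := by
  have hd0 : d ≠ 0 := fun h => hd ⟨0, by rw [h]; ring⟩
  constructor
  · constructor
    · rintro ⟨e⟩
      obtain ⟨p, q, hpq⟩ := quad_split_rev hd e
      refine ⟨algebraMap K L p + q • s, ?_, ?_⟩
      · intro h0
        obtain ⟨hp, hq⟩ := quad_indep hd hs h0
        rw [hp, hq] at hpq
        exact one_ne_zero (by linear_combination hpq : (1:K) = 0)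
      · rw [quad_norm hd hs hgen, hpq]
    · rintro ⟨l, hl0, hln⟩
      obtain ⟨p, q, rfl⟩ := quad_decomp hs hgen l
      rw [quad_norm hd hs hgen] at hln
      exact quad_split h2 hd hln
  · -- Part 2
    -- basic setup
    have hinj : Function.Injective ι := RingHom.injective (ι.toRingHom)
    set m : QuaternionAlgebra K a 0 b := ι s with hmdef
    have hι : ∀ α β : K, ι (algebraMap K L α + β • s)
        = algebraMap K (QuaternionAlgebra K a 0 b) α + β • m := by
      intro α β
      rw [map_add, map_smul, AlgHom.commutes]
    have hm2 : m * m = algebraMap K (QuaternionAlgebra K a 0 b) d := by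
      rw [hmdef, ← map_mul, ← sq, hs, AlgHom.commutes]
    have hσs : σ s = -s := by
      have hsq : (σ s) * (σ s) = s * s := by
        rw [← map_mul, ← sq, hs, AlgEquiv.commutes, ← hs, sq]
      rcases mul_self_eq_mul_self_iff.mp hsq with h | h
      · exfalso
        apply hσ
        apply AlgEquiv.ext
        intro x
        obtain ⟨α, β, rfl⟩ := quad_decomp hs hgen x
        rw [map_add, map_smul, AlgEquiv.commutes, h]
        rfl
      · exact h
    have hσd : ∀ α β : K, σ (algebraMap K L α + β • s) = algebraMap K L α - β • s := by
      intro α β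
      rw [map_add, map_smul, AlgEquiv.commutes, hσs, smul_neg, ← sub_eq_add_neg]
    have hσσ : ∀ x : L, σ (σ x) = x := by
      intro x
      obtain ⟨α, β, rfl⟩ := quad_decomp hs hgen x
      rw [hσd, sub_eq_add_neg, ← neg_smul, hσd, neg_smul, sub_neg_eq_add]
    have hmscalar : ∀ r : K, m ≠ algebraMap K (QuaternionAlgebra K a 0 b) r := by
      intro r hmr
      apply hd
      refine ⟨r, ?_⟩
      have hsr : s = algebraMap K L r := by
        apply hinj
        rw [AlgHom.commutes]
        exact hmr
      have := hs
      rw [hsr, ← map_pow] at this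
      exact (algebraMap K L).injective this
    have hmre : m.re = 0 := by
      by_contra hr
      have q1 := congrArg QuaternionAlgebra.imI hm2
      have q2 := congrArg QuaternionAlgebra.imJ hm2
      have q3 := congrArg QuaternionAlgebra.imK hm2
      simp only [QuaternionAlgebra.imI_mul, QuaternionAlgebra.imJ_mul,
        QuaternionAlgebra.imK_mul, QuaternionAlgebra.algebraMap_eq] at q1 q2 q3
      have e1 : m.imI = 0 := by
        have h0 : (2 * m.re) * m.imI = 0 := by linear_combination q1
        rcases mul_eq_zero.mp h0 with h | h
        · rcases mul_eq_zero.mp h with h' | h'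
          · exact absurd h' h2
          · exact absurd h' hr
        · exact h
      have e2 : m.imJ = 0 := by
        have h0 : (2 * m.re) * m.imJ = 0 := by linear_combination q2
        rcases mul_eq_zero.mp h0 with h | h
        · rcases mul_eq_zero.mp h with h' | h'
          · exact absurd h' h2
          · exact absurd h' hr
        · exact h
      have e3 : m.imK = 0 := by
        have h0 : (2 * m.re) * m.imK = 0 := by linear_combination q3
        rcases mul_eq_zero.mp h0 with h | h
        · rcases mul_eq_zero.mp h with h' | h'
          · exact absurd h' h2
          · exact absurd h' hr
        · exact h
      exact hmscalar m.re (by ext <;> simp [QuaternionAlgebra.algebraMap_eq, e1, e2, e3])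
    have hstarm : star m = -m := by
      ext <;> simp [hmre]
    have hstarcoe : ∀ r : K, star (algebraMap K (QuaternionAlgebra K a 0 b) r)
        = algebraMap K (QuaternionAlgebra K a 0 b) r := by
      intro r
      ext <;> simp [QuaternionAlgebra.coe_algebraMap]
    have hstarι : ∀ α β : K, star (ι (algebraMap K L α + β • s))
        = ι (σ (algebraMap K L α + β • s)) := by
      intro α β
      rw [hι, hσd, sub_eq_add_neg, ← neg_smul, hι]
      ext <;> simp [QuaternionAlgebra.algebraMap_eq, hmre]
    have hZ : ∀ x : L, ι x * c = 0 → x = 0 := by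
      intro x hx
      by_contra hx0
      apply hc0
      calc c = ι (x⁻¹) * (ι x * c) := by
              rw [← mul_assoc, ← map_mul, inv_mul_cancel₀ hx0, map_one, one_mul]
        _ = 0 := by rw [hx, mul_zero]
    have hcm : c * m = -(m * c) := by
      have := hcconj s
      rw [hσs, map_neg] at this
      rw [hmdef, this, neg_mul]
    have key : ∀ g0 g1 g2 g3 : K,
        m * (g0•(1:QuaternionAlgebra K a 0 b) + g1•m + g2•c + g3•(m*c))
          = (g0•(1:QuaternionAlgebra K a 0 b) + g1•m + g2•c + g3•(m*c)) * m →
        g2 = 0 ∧ g3 = 0 := by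
      intro g0 g1 g2 g3 hc2
      have hmmc : m * (m * c) = d • c := by
        rw [← mul_assoc, hm2, Algebra.smul_def]
      have hmcm : (m * c) * m = -(d • c) := by
        rw [mul_assoc, hcm, mul_neg, hmmc]
      have e : (2*g2) • (m*c) + (2*(d*g3)) • c = 0 := by
        have : m * (g0•(1:QuaternionAlgebra K a 0 b) + g1•m + g2•c + g3•(m*c))
            - (g0•(1:QuaternionAlgebra K a 0 b) + g1•m + g2•c + g3•(m*c)) * m = 0 := by
          rw [hc2, sub_self]
        rw [← this]
        simp only [mul_add, add_mul, mul_smul_comm, smul_mul_assoc, mul_one, one_mul,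
          hcm, hmmc, hmcm]
        module
      have : ι (algebraMap K L (2*(d*g3)) + (2*g2) • s) * c = 0 := by
        rw [hι, add_mul, smul_mul_assoc, Algebra.smul_def (2*g2) (m*c), ← Algebra.smul_def,
          ← e, add_comm, Algebra.smul_def, ← Algebra.smul_def]
      obtain ⟨h3, h2g⟩ := quad_indep hd hs (hZ _ this)
      constructor
      · rcases mul_eq_zero.mp h2g with h | h
        · exact absurd h h2
        · exact h
      · rcases mul_eq_zero.mp h3 with h | h
        · exact absurd h h2
        · rcases mul_eq_zero.mp h with h' | h'
          · exact absurd h' hd0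
          · exact h'
    -- linear independence of 1, m, c, m*c
    have hli : LinearIndependent K ![(1:QuaternionAlgebra K a 0 b), m, c, m*c] := by
      rw [Fintype.linearIndependent_iff]
      intro g hg
      rw [Fin.sum_univ_four] at hg
      simp only [Matrix.cons_val_zero, Matrix.cons_val_one, Matrix.head_cons,
        Matrix.cons_val_two, Matrix.tail_cons, Matrix.cons_val_three] at hg
      obtain ⟨h2z, h3z⟩ := key (g 0) (g 1) (g 2) (g 3) (by rw [hg, mul_zero, zero_mul])
      have hg' : ι (algebraMap K L (g 0) + (g 1) • s) = 0 := by
        rw [hι]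
        rw [h2z, h3z, zero_smul, zero_smul, add_zero, add_zero] at hg
        rw [← hg, Algebra.algebraMap_eq_smul_one]
      have h00 : algebraMap K L (g 0) + (g 1) • s = 0 := by
        apply hinj; rw [hg', map_zero]
      obtain ⟨e0, e1⟩ := quad_indep hd hs h00
      intro i
      fin_cases i
      · exact e0
      · exact e1
      · exact h2z
      · exact h3z
    have hcard : Fintype.card (Fin 4) = Module.finrank K (QuaternionAlgebra K a 0 b) := by
      rw [QuaternionAlgebra.finrank_eq_four, Fintype.card_fin]
    have hcent : ∀ X : QuaternionAlgebra K a 0 b, m * X = X * m →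
        ∃ α β : K, X = algebraMap K (QuaternionAlgebra K a 0 b) α + β • m := by
      intro X hX
      let bas := basisOfLinearIndependentOfCardEqFinrank hli hcard
      have hb : ⇑bas = ![(1:QuaternionAlgebra K a 0 b), m, c, m*c] :=
        coe_basisOfLinearIndependentOfCardEqFinrank hli hcard
      have hbX := bas.sum_repr X
      rw [Fin.sum_univ_four, hb] at hbX
      simp only [Matrix.cons_val_zero, Matrix.cons_val_one, Matrix.head_cons,
        Matrix.cons_val_two, Matrix.tail_cons, Matrix.cons_val_three] at hbX
      rw [← hbX] at hX
      obtain ⟨h2z, h3z⟩ := key _ _ _ _ hX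
      refine ⟨bas.repr X 0, bas.repr X 1, ?_⟩
      rw [h2z, h3z, zero_smul, zero_smul, add_zero, add_zero] at hbX
      rw [Algebra.algebraMap_eq_smul_one]
      exact hbX.symm
    have hstarsmul : ∀ (r : K) (X : QuaternionAlgebra K a 0 b), star (r • X) = r • star X := by
      intro r X
      ext <;> simp
    have hstarc : star c = -c := by
      ext <;> simp [hcpure]
    -- the units part
    intro u hu
    obtain ⟨t, ht⟩ := hu s
    have htt : t * t = s * s := by
      apply hinj
      have h1 : (↑u : QuaternionAlgebra K a 0 b) * (ι s * ι s) = ι (t*t) * ↑u := by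
        rw [← mul_assoc, ht, mul_assoc, ht, ← mul_assoc, map_mul]
      have h1' : (↑u : QuaternionAlgebra K a 0 b) * (ι s * ι s) = ι (s*s) * ↑u := by
        rw [← map_mul, ← sq, hs, AlgHom.commutes]
        exact (Algebra.commutes d (↑u : QuaternionAlgebra K a 0 b)).symm
      have h4 : ι (t*t) * (↑u : QuaternionAlgebra K a 0 b) = ι (s*s) * ↑u := by
        rw [← h1, h1']
      calc ι (t*t) = ι (t*t) * ↑u * ↑u⁻¹ := by rw [mul_assoc, Units.mul_inv, mul_one]
        _ = ι (s*s) * ↑u * ↑u⁻¹ := by rw [h4]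
        _ = ι (s*s) := by rw [mul_assoc, Units.mul_inv, mul_one]
    rcases mul_self_eq_mul_self_iff.mp htt with hts | hts
    · -- commuting case
      left
      have hum : (↑u : QuaternionAlgebra K a 0 b) * m = m * ↑u := by
        rw [hmdef, ht, hts]
      intro x
      obtain ⟨α, β, rfl⟩ := quad_decomp hs hgen x
      rw [hι, mul_add, add_mul]
      congr 1
      · exact (Algebra.commutes α _).symm
      · rw [mul_smul_comm, smul_mul_assoc, hum]
    · -- conjugating case
      right
      have hum : (↑u : QuaternionAlgebra K a 0 b) * m = -(m * ↑u) := by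
        rw [hmdef, ht, hts, map_neg, neg_mul]
      have huσ : ∀ x : L, (↑u : QuaternionAlgebra K a 0 b) * ι x = ι (σ x) * ↑u := by
        intro x
        obtain ⟨α, β, rfl⟩ := quad_decomp hs hgen x
        rw [hι, hσd, sub_eq_add_neg, ← neg_smul, hι, mul_add, add_mul]
        congr 1
        · exact (Algebra.commutes α _).symm
        · rw [mul_smul_comm, smul_mul_assoc, hum, smul_neg, neg_smul]
      refine ⟨huσ, ?_⟩
      have hw : m * (↑u * c) = (↑u * c) * m := by
        calc m * ((↑u : QuaternionAlgebra K a 0 b) * c) = (m * ↑u) * c := by rw [mul_assoc]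
          _ = (-(↑u * m)) * c := by rw [hum, neg_neg]
          _ = -(↑u * (m * c)) := by rw [neg_mul, mul_assoc]
          _ = ↑u * (c * m) := by rw [hcm, mul_neg]
          _ = (↑u * c) * m := by rw [mul_assoc]
      obtain ⟨α, β, hweq⟩ := hcent (↑u * c) hw
      set l₀ : L := algebraMap K L α + β • s with hl₀def
      have hwι : (↑u : QuaternionAlgebra K a 0 b) * c = ι l₀ := by
        rw [hl₀def, hι]
        exact hweq
      have hl₀ : l₀ ≠ 0 := by
        intro h0
        apply hc0
        have hz : (↑u : QuaternionAlgebra K a 0 b) * c = 0 := by rw [hwι, h0, map_zero]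
        calc c = ↑u⁻¹ * ((↑u : QuaternionAlgebra K a 0 b) * c) := by
                rw [← mul_assoc, Units.inv_mul, one_mul]
          _ = 0 := by rw [hz, mul_zero]
      set γ : K := a*c.imI^2 + b*c.imJ^2 - a*b*c.imK^2 with hγdef
      have hγ : c * c = algebraMap K (QuaternionAlgebra K a 0 b) γ := by
        ext <;> simp [QuaternionAlgebra.re_mul, QuaternionAlgebra.imI_mul,
          QuaternionAlgebra.imJ_mul, QuaternionAlgebra.imK_mul,
          QuaternionAlgebra.algebraMap_eq, hcpure] <;> ring
      have hγ0 : γ ≠ 0 := by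
        intro h0
        have hz : ι l₀ * c = 0 := by
          rw [← hwι, mul_assoc, hγ, h0, map_zero, mul_zero]
        exact absurd (hZ _ hz) hl₀
      have hstarl : star (ι l₀) = ι (σ l₀) := by
        rw [hl₀def]
        exact hstarι α β
      have hueq : (↑u : QuaternionAlgebra K a 0 b) = γ⁻¹ • (ι l₀ * c) := by
        rw [← hwι, mul_assoc, hγ, ← Algebra.commutes, ← Algebra.smul_def, smul_smul,
          inv_mul_cancel₀ hγ0, one_smul]
      refine ⟨γ⁻¹ • l₀, smul_ne_zero (inv_ne_zero hγ0) hl₀, ?_⟩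
      have hinner : ι l₀ * c * (-c * ι (σ l₀))
          = -(c*c) * ι (l₀ * σ l₀) := by
        rw [map_mul ι]
        calc ι l₀ * c * (-c * ι (σ l₀))
            = -(ι l₀ * (c * c) * ι (σ l₀)) := by noncomm_ring
          _ = -(ι l₀ * algebraMap K (QuaternionAlgebra K a 0 b) γ * ι (σ l₀)) := by rw [hγ]
          _ = -(algebraMap K (QuaternionAlgebra K a 0 b) γ * ι l₀ * ι (σ l₀)) := by
              rw [Algebra.commutes]
          _ = -(c*c) * (ι l₀ * ι (σ l₀)) := by rw [← hγ, neg_mul, mul_assoc]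
      rw [hueq, hstarsmul, star_mul, hstarc, hstarl, smul_mul_assoc, mul_smul_comm, smul_smul,
        hinner, map_smul σ, smul_mul_assoc, mul_smul_comm, smul_smul, map_smul ι, mul_smul_comm]
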